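/- Let M, K be symmetric positive definite and Φ nonsingular with Φᵀ M Φ = I and Φᵀ K Φ = Ω², Ω diagonal positive. Then the internal damping matrix C_int = 2α M^{1/2}(M^{-1/2} K M^{-1/2})^{1/2} M^{1/2} satisfies Φᵀ C_int Φ = 2α Ω, i.e., the modal matrix diagonalizes C_int. -/

import Mathlib

open Matrix

/-- The modal matrix `Φ` (with `Φᵀ M Φ = I`, `Φᵀ K Φ = Ω²`) diagonalizes the internal
damping matrix `C_int = 2α M^{1/2} (M^{-1/2} K M^{-1/2})^{1/2} M^{1/2}`:
`Φᵀ C_int Φ = 2α Ω`. -/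
theorem stmt_3 {n : ℕ} (M K S T Φ : Matrix (Fin n) (Fin n) ℝ) (α : ℝ) (hα : 0 < α)
    (hM : M.PosDef) (hK : K.PosDef)
    (hS : S.PosDef) (hS2 : S * S = M)
    (hT : T.PosDef) (hT2 : T * T = S⁻¹ * K * S⁻¹)
    (hΦ : IsUnit Φ.det) (ω : Fin n → ℝ) (hω : ∀ i, 0 < ω i)
    (h1 : Φᵀ * M * Φ = 1)
    (h2 : Φᵀ * K * Φ = Matrix.diagonal (fun i => ω i ^ 2)) :
    Φᵀ * ((2 * α) • (S * T * S)) * Φ = (2 * α) • Matrix.diagonal ω := by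
  have hSsym : Sᵀ = S := by
    have := hS.isHermitian.eq
    simpa [Matrix.conjTranspose_eq_transpose_of_trivial] using this
  have hSdet : IsUnit S.det := isUnit_iff_ne_zero.mpr (ne_of_gt hS.det_pos)
  have hSinv : S * S⁻¹ = 1 := mul_nonsing_inv _ hSdet
  have hSinv' : S⁻¹ * S = 1 := nonsing_inv_mul _ hSdet
  set P := S * Φ with hP
  have hPt : Pᵀ = Φᵀ * S := by rw [hP, transpose_mul, hSsym]
  have hPtP : Pᵀ * P = 1 := by
    rw [← hS2] at h1
    rw [hPt, hP, ← h1]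
    simp [Matrix.mul_assoc]
  have hPPt : P * Pᵀ = 1 := mul_eq_one_comm.mp hPtP
  have hX : (Pᵀ * T * P).PosSemidef := by
    have := hT.posSemidef.conjTranspose_mul_mul_same P
    simpa [Matrix.conjTranspose_eq_transpose_of_trivial] using this
  have hXsq : (Pᵀ * T * P) ^ 2 = (Matrix.diagonal ω) ^ 2 := by
    have : (Pᵀ * T * P) ^ 2 = Pᵀ * (T * T) * P := by
      rw [pow_two]
      calc Pᵀ * T * P * (Pᵀ * T * P) = Pᵀ * (T * (P * Pᵀ) * T) * P := by
            simp [Matrix.mul_assoc]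
      _ = Pᵀ * (T * T) * P := by rw [hPPt, Matrix.mul_one]
    rw [this, hT2, hPt, hP]
    have : Φᵀ * S * (S⁻¹ * K * S⁻¹) * (S * Φ)
        = Φᵀ * ((S * S⁻¹) * K * (S⁻¹ * S)) * Φ := by simp [Matrix.mul_assoc]
    rw [this, hSinv, hSinv', Matrix.one_mul, Matrix.mul_one, h2, pow_two,
      Matrix.diagonal_mul_diagonal]
    simp only [pow_two]
  have hdiag : (Matrix.diagonal ω).PosSemidef :=
    posSemidef_diagonal_iff.mpr fun i => (hω i).le
  have hXeq : Pᵀ * T * P = Matrix.diagonal ω := 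
    open scoped MatrixOrder in (CFC.sq_eq_sq_iff _ _ hX.nonneg hdiag.nonneg).mp hXsq
  calc Φᵀ * ((2 * α) • (S * T * S)) * Φ = (2 * α) • (Φᵀ * (S * T * S) * Φ) := by
        rw [Matrix.mul_smul, Matrix.smul_mul]
  _ = (2 * α) • (Pᵀ * T * P) := by rw [hPt, hP]; simp [Matrix.mul_assoc]
  _ = (2 * α) • Matrix.diagonal ω := by rw [hXeq]
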